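/- Suppose scores have differentiable densities f₊, f₋ with f₊ > 0 on the relevant range, and the ROC curve is concave (equivalently, the likelihood ratio h(t) = f₊(t)/f₋(t) is nondecreasing in t). If moreover M₊ ≥ M₋, then the PR curve y_PR(x) is nonincreasing in x on (0,1). -/

import Mathlib

open Filter Set Topology

noncomputable def quantile (F : ℝ → ℝ) (p : ℝ) : ℝ := sInf {z | p ≤ F z}

/-- The derivative of an antitone function is nonpositive. -/
lemma antitone_hasDerivAt_nonpos {q : ℝ → ℝ} {q' t : ℝ} (hq : HasDerivAt q q' t)
    (ha : Antitone q) : q' ≤ 0 := by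
  have h := hasDerivAt_iff_tendsto_slope.1 hq
  have h2 : Tendsto (slope q t) (𝓝[>] t) (𝓝 q') :=
    h.mono_left (nhdsWithin_mono t (fun s hs => (hs : t < s).ne'))
  refine le_of_tendsto h2 ?_
  filter_upwards [self_mem_nhdsWithin] with s hs
  have hqs : q s ≤ q t := ha (le_of_lt hs)
  rw [slope_def_field]
  have : (q s - q t) / (s - t) ≤ 0 :=
    div_nonpos_of_nonpos_of_nonneg (by linarith) (by linarith [le_of_lt (show t < s from hs)])
  simpa [div_eq_inv_mul] using this

/-- If scores have differentiable densities with `fP > 0`, the ROC curve is concave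
(equivalently the likelihood ratio `fP/fN` is nondecreasing), and `MP ≥ MN`, then the
PR curve is nonincreasing on (0,1). -/
theorem pr_nonincreasing_of_concave_roc (FP FN fP fN : ℝ → ℝ)
    (hdP : ∀ t, HasDerivAt FP (fP t) t) (hdN : ∀ t, HasDerivAt FN (fN t) t)
    (hdiffP : Differentiable ℝ fP) (hdiffN : Differentiable ℝ fN)
    (hpos : ∀ t, 0 < fP t)
    (hLR : Monotone (fun t => fP t / fN t))
    (hFPtop : Tendsto FP atTop (nhds 1)) (hFPbot : Tendsto FP atBot (nhds 0))
    (hFNtop : Tendsto FN atTop (nhds 1)) (hFNbot : Tendsto FN atBot (nhds 0))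
    (hMM : sSup {t | FN t < 1} ≤ sSup {t | FP t < 1})
    (πP πN : ℝ) (hπ : πP ∈ Ioo (0:ℝ) 1) (hπN : πN = 1 - πP) :
    AntitoneOn (fun x => πP / (πP + πN * ((1 - FN (quantile FP (1 - x))) / x)))
      (Ioo (0:ℝ) 1) := by
  obtain ⟨hπP, hπP1⟩ := hπ
  have hπNpos : 0 < πN := by rw [hπN]; linarith
  -- Step 1 : fN is everywhere positive
  have hNpos : ∀ t, 0 < fN t := by
    by_contra hcon
    push_neg at hcon
    obtain ⟨t₁, ht₁⟩ := hcon
    have hrt₁ : fP t₁ / fN t₁ ≤ 0 :=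
      div_nonpos_of_nonneg_of_nonpos (hpos t₁).le ht₁
    have hA : ∀ s, s ≤ t₁ → fN s ≤ 0 := by
      intro s hs
      by_contra hsc; push_neg at hsc
      have h1 : fP s / fN s ≤ fP t₁ / fN t₁ := hLR hs
      have h2 : 0 < fP s / fN s := div_pos (hpos s) hsc
      linarith
    have hB : FN t₁ ≤ 0 := by
      have hmono : AntitoneOn FN (Iic t₁) := by
        refine antitoneOn_of_hasDerivWithinAt_nonpos (convex_Iic t₁)
          (fun x _ => (hdN x).continuousAt.continuousWithinAt)
          (fun x hx => (hdN x).hasDerivWithinAt) ?_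
        intro x hx
        rw [interior_Iic] at hx
        exact hA x hx.le
      refine ge_of_tendsto hFNbot ?_
      filter_upwards [eventually_le_atBot t₁] with s hs
      exact hmono (mem_Iic.2 hs) (mem_Iic.2 le_rfl) hs
    have hC : ∃ t₂, t₁ < t₂ ∧ 0 < fN t₂ := by
      by_contra hc; push_neg at hc
      have hall : ∀ t, fN t ≤ 0 := by
        intro t
        rcases le_or_gt t t₁ with h | h
        · exact hA t h
        · exact hc t h
      have hanti : Antitone FN := antitone_of_hasDerivAt_nonpos hdN hall
      have h1 : (1:ℝ) ≤ FN t₁ := by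
        refine le_of_tendsto hFNtop ?_
        filter_upwards [eventually_ge_atTop t₁] with s hs
        exact hanti hs
      linarith
    obtain ⟨t₂, ht₁₂, hfN₂⟩ := hC
    set S : Set ℝ := Icc t₁ t₂ ∩ {t | fN t ≤ 0} with hS
    have hSne : S.Nonempty := ⟨t₁, ⟨le_rfl, ht₁₂.le⟩, ht₁⟩
    have hScomp : IsCompact S :=
      isCompact_Icc.inter_right (isClosed_le hdiffN.continuous continuous_const)
    have ht₀mem := hScomp.sSup_mem hSne
    set t₀ := sSup S with ht₀
    obtain ⟨⟨ht₀₁, ht₀₂⟩, ht₀N⟩ := ht₀mem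
    have ht₀lt : t₀ < t₂ := lt_of_le_of_ne ht₀₂ (fun h => by
      rw [h] at ht₀N; exact absurd hfN₂ (not_lt.2 ht₀N))
    have hkey : ∀ t ∈ Ioc t₀ t₂, fP t ≤ (fP t₂ / fN t₂) * fN t := by
      rintro t ⟨hta, htb⟩
      have htpos : 0 < fN t := by
        by_contra hn; push_neg at hn
        have htS : t ∈ S := ⟨⟨ht₀₁.trans hta.le, htb⟩, hn⟩
        exact absurd (le_csSup hScomp.bddAbove htS) (not_le.2 hta)
      have h1 : fP t / fN t ≤ fP t₂ / fN t₂ := hLR htb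
      exact (div_le_iff₀ htpos).1 h1
    have hlim : fP t₀ ≤ (fP t₂ / fN t₂) * fN t₀ := by
      have h1 : Tendsto fP (𝓝[>] t₀) (𝓝 (fP t₀)) :=
        (hdiffP.continuous.tendsto t₀).mono_left nhdsWithin_le_nhds
      have h2 : Tendsto (fun t => (fP t₂ / fN t₂) * fN t) (𝓝[>] t₀)
          (𝓝 ((fP t₂ / fN t₂) * fN t₀)) :=
        ((hdiffN.continuous.tendsto t₀).const_mul _).mono_left nhdsWithin_le_nhds
      refine le_of_tendsto_of_tendsto h1 h2 ?_
      filter_upwards [Ioc_mem_nhdsGT ht₀lt] with t ht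
      exact hkey t ht
    have hr₂ : 0 ≤ fP t₂ / fN t₂ := (div_pos (hpos t₂) hfN₂).le
    have hfneg : fN t₀ ≤ 0 := ht₀N
    have : fP t₂ / fN t₂ * fN t₀ ≤ 0 := mul_nonpos_iff.2 (Or.inl ⟨hr₂, hfneg⟩)
    linarith [hpos t₀]
  -- basic monotonicity / bounds
  have hFPmono : StrictMono FP := strictMono_of_hasDerivAt_pos hdP hpos
  have hFNmono : StrictMono FN := strictMono_of_hasDerivAt_pos hdN hNpos
  have hFPle : ∀ t, FP t ≤ 1 := by
    intro t
    refine ge_of_tendsto hFPtop ?_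
    filter_upwards [eventually_ge_atTop t] with s hs
    exact (hFPmono.monotone hs)
  have hFNle : ∀ t, FN t ≤ 1 := by
    intro t
    refine ge_of_tendsto hFNtop ?_
    filter_upwards [eventually_ge_atTop t] with s hs
    exact (hFNmono.monotone hs)
  have hFPlt : ∀ t, FP t < 1 := fun t => lt_of_lt_of_le (hFPmono (lt_add_one t)) (hFPle _)
  -- quantile is a genuine inverse on (0,1)
  have hquant : ∀ p : ℝ, 0 < p → p < 1 → FP (quantile FP p) = p := by
    intro p hp0 hp1
    obtain ⟨a, ha⟩ := (hFPbot.eventually_lt_const hp0).exists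
    obtain ⟨b, hb⟩ := (hFPtop.eventually_const_lt hp1).exists
    have hab : a ≤ b := (hFPmono.lt_iff_lt.1 (ha.trans hb)).le
    obtain ⟨z, _, hz⟩ := intermediate_value_Icc hab
      (fun t _ => (hdP t).continuousAt.continuousWithinAt) ⟨ha.le, hb.le⟩
    have hset : {w | p ≤ FP w} = Ici z := by
      ext w
      simp only [mem_setOf_eq, mem_Ici, ← hz, hFPmono.le_iff_le]
    rw [quantile, hset, csInf_Ici, hz]
  -- q = fN / fP is antitone
  have hqanti : Antitone (fun t => fN t / fP t) := by
    intro s t hst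
    have h1 : fP s * fN t ≤ fP t * fN s := (div_le_div_iff₀ (hNpos s) (hNpos t)).1 (hLR hst)
    exact (div_le_div_iff₀ (hpos t) (hpos s)).2 (by nlinarith)
  have hqdiff : Differentiable ℝ (fun t => fN t / fP t) :=
    hdiffN.div hdiffP (fun t => (hpos t).ne')
  -- the function d is antitone with limit 0 at +infinity, hence nonnegative
  set q : ℝ → ℝ := fun t => fN t / fP t with hqdef
  set d : ℝ → ℝ := fun t => q t * (1 - FP t) - (1 - FN t) with hddef
  set d' : ℝ → ℝ := fun t => deriv q t * (1 - FP t) + q t * (-fP t) - -fN t with hd'def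
  have hd : ∀ t, HasDerivAt d (d' t) t := by
    intro t
    have h1 : HasDerivAt (fun t => 1 - FP t) (-fP t) t := (hdP t).const_sub 1
    have h2 : HasDerivAt (fun t => 1 - FN t) (-fN t) t := (hdN t).const_sub 1
    exact (((hqdiff t).hasDerivAt.mul h1)).sub h2
  have hd'le : ∀ t, d' t ≤ 0 := by
    intro t
    have hq' : deriv q t ≤ 0 :=
      antitone_hasDerivAt_nonpos (hqdiff t).hasDerivAt hqanti
    have hqf : q t * fP t = fN t := div_mul_cancel₀ _ (hpos t).ne'
    have h1 : deriv q t * (1 - FP t) ≤ 0 :=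
      mul_nonpos_iff.2 (Or.inr ⟨hq', by linarith [hFPle t]⟩)
    simp only [hd'def]
    nlinarith
  have hdanti : Antitone d := antitone_of_hasDerivAt_nonpos hd hd'le
  have hq0 : ∀ t, 0 ≤ q t := fun t => (div_pos (hNpos t) (hpos t)).le
  have hdtend : Tendsto d atTop (𝓝 0) := by
    have hFP0 : Tendsto (fun t => 1 - FP t) atTop (𝓝 0) := by
      have := (tendsto_const_nhds (x := (1:ℝ)) (f := atTop)).sub hFPtop
      simpa using this
    have hFN0 : Tendsto (fun t => 1 - FN t) atTop (𝓝 0) := by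
      have := (tendsto_const_nhds (x := (1:ℝ)) (f := atTop)).sub hFNtop
      simpa using this
    have h1 : Tendsto (fun t => q t * (1 - FP t)) atTop (𝓝 0) := by
      refine squeeze_zero' ?_ ?_ (by simpa using (hFP0.const_mul (q 0)))
      · filter_upwards with t
        exact mul_nonneg (hq0 t) (by linarith [hFPle t])
      · filter_upwards [eventually_ge_atTop (0:ℝ)] with t ht
        exact mul_le_mul_of_nonneg_right (hqanti ht) (by linarith [hFPle t])
    have := h1.sub hFN0
    simpa using this
  have hd0 : ∀ t, 0 ≤ d t := by
    intro t
    refine le_of_tendsto hdtend ?_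
    filter_upwards [eventually_ge_atTop t] with s hs
    exact hdanti hs
  -- φ = (1 - FN) / (1 - FP) is antitone
  set φ : ℝ → ℝ := fun t => (1 - FN t) / (1 - FP t) with hφdef
  set φ' : ℝ → ℝ :=
    fun t => (-fN t * (1 - FP t) - (1 - FN t) * -fP t) / (1 - FP t) ^ 2 with hφ'def
  have hφ : ∀ t, HasDerivAt φ (φ' t) t := by
    intro t
    have h1 : HasDerivAt (fun t => 1 - FP t) (-fP t) t := (hdP t).const_sub 1
    have h2 : HasDerivAt (fun t => 1 - FN t) (-fN t) t := (hdN t).const_sub 1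
    exact h2.div h1 (by linarith [hFPlt t])
  have hφ'le : ∀ t, φ' t ≤ 0 := by
    intro t
    have hdt := hd0 t
    have hqf : q t * fP t = fN t := div_mul_cancel₀ _ (hpos t).ne'
    have hnum : -fN t * (1 - FP t) - (1 - FN t) * -fP t ≤ 0 := by
      simp only [hddef] at hdt
      have h6 : (1 - FN t) ≤ q t * (1 - FP t) := by linarith
      have h5 : (1 - FN t) * fP t ≤ fN t * (1 - FP t) := by
        calc (1 - FN t) * fP t ≤ q t * (1 - FP t) * fP t :=
              mul_le_mul_of_nonneg_right h6 (hpos t).le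
          _ = fN t * (1 - FP t) := by rw [mul_right_comm, hqf]
      nlinarith [h5]
    exact div_nonpos_of_nonpos_of_nonneg hnum (sq_nonneg _)
  have hφanti : Antitone φ := antitone_of_hasDerivAt_nonpos hφ hφ'le
  -- conclusion
  intro x₁ hx₁ x₂ hx₂ h12
  obtain ⟨hx₁0, hx₁1⟩ := hx₁
  obtain ⟨hx₂0, hx₂1⟩ := hx₂
  have hFPt1 : FP (quantile FP (1 - x₁)) = 1 - x₁ := hquant _ (by linarith) (by linarith)
  have hFPt2 : FP (quantile FP (1 - x₂)) = 1 - x₂ := hquant _ (by linarith) (by linarith)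
  set t1 := quantile FP (1 - x₁)
  set t2 := quantile FP (1 - x₂)
  have ht21 : t2 ≤ t1 := by
    have : FP t2 ≤ FP t1 := by rw [hFPt1, hFPt2]; linarith
    exact hFPmono.le_iff_le.1 this
  have hg1 : (1 - FN t1) / x₁ = φ t1 := by
    have hx : (1:ℝ) - FP t1 = x₁ := by rw [hFPt1]; ring
    simp only [hφdef]
    rw [hx]
  have hg2 : (1 - FN t2) / x₂ = φ t2 := by
    have hx : (1:ℝ) - FP t2 = x₂ := by rw [hFPt2]; ring
    simp only [hφdef]
    rw [hx]
  have hφle : φ t1 ≤ φ t2 := hφanti ht21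
  have hφnn : 0 ≤ φ t1 := div_nonneg (by linarith [hFNle t1]) (by linarith [hFPlt t1])
  show πP / (πP + πN * ((1 - FN t2) / x₂)) ≤ πP / (πP + πN * ((1 - FN t1) / x₁))
  rw [hg1, hg2]
  have hb : 0 < πP + πN * φ t1 := by positivity
  have hbc : πP + πN * φ t1 ≤ πP + πN * φ t2 := by nlinarith
  exact div_le_div_of_nonneg_left hπP.le hb hbc |>.trans_eq rfl
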